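/- arXiv:2211.12070 — 6 statements merged into one kernel-verified Lean document; each statement's English description precedes it below -/
import Mathlib

section
/- Let Γ be a symmetric positive-definite real p×p matrix and let N be a symmetric positive semi-definite real p×p matrix. Then I_p + ΓN is invertible and the map x ↦ (I_p + ΓN)⁻¹x is a contraction in the Γ⁻¹-weighted norm: for all x ∈ ℝᵖ, ((I_p+ΓN)⁻¹x)ᵀ Γ⁻¹ ((I_p+ΓN)⁻¹x) ≤ xᵀΓ⁻¹x; equivalently, Γ⁻¹ − (I_p+ΓN)⁻ᵀ Γ⁻¹ (I_p+ΓN)⁻¹ is positive semi-definite. -/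
open Matrix

/-- For `Γ` symmetric positive definite and `N` symmetric positive
semi-definite, `I + Γ N` is invertible and `x ↦ (I + Γ N)⁻¹ x` is a contraction in the
`Γ⁻¹`-weighted norm: for all `x`,
`((I+ΓN)⁻¹x)ᵀ Γ⁻¹ ((I+ΓN)⁻¹x) ≤ xᵀ Γ⁻¹ x`; equivalently,
`Γ⁻¹ − ((I+ΓN)⁻¹)ᵀ Γ⁻¹ (I+ΓN)⁻¹` is positive semi-definite. -/
theorem stmt5 {p : ℕ} (Γ N : Matrix (Fin p) (Fin p) ℝ)
    (hΓ : Γ.PosDef) (hN : N.PosSemidef) :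
    IsUnit (1 + Γ * N) ∧
    (∀ x : Fin p → ℝ,
      ((1 + Γ * N)⁻¹ *ᵥ x) ⬝ᵥ (Γ⁻¹ *ᵥ ((1 + Γ * N)⁻¹ *ᵥ x)) ≤ x ⬝ᵥ (Γ⁻¹ *ᵥ x)) ∧
    (Γ⁻¹ - ((1 + Γ * N)⁻¹)ᵀ * Γ⁻¹ * (1 + Γ * N)⁻¹).PosSemidef := by
  have hdet : IsUnit Γ.det := hΓ.det_pos.ne'.isUnit
  have hΓinv : (Γ⁻¹).PosDef := hΓ.inv
  have hsum : (Γ⁻¹ + N).PosDef := hΓinv.add_posSemidef hN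
  have hΓΓinv : Γ * Γ⁻¹ = 1 := Matrix.mul_nonsing_inv _ hdet
  have hΓinvΓ : Γ⁻¹ * Γ = 1 := Matrix.nonsing_inv_mul _ hdet
  have hfact : 1 + Γ * N = Γ * (Γ⁻¹ + N) := by
    rw [mul_add, hΓΓinv]
  have hU : IsUnit (1 + Γ * N) := by
    rw [hfact]; exact hΓ.isUnit.mul hsum.isUnit
  set B := 1 + Γ * N with hB
  set A := B⁻¹ with hA
  have hdetB : IsUnit B.det := (Matrix.isUnit_iff_isUnit_det _).mp hU
  have hBA : B * A = 1 := Matrix.mul_nonsing_inv _ hdetB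
  have hNt : Nᵀ = N := hN.isHermitian
  have hΓt : Γᵀ = Γ := hΓ.isHermitian
  have hmid : Bᵀ * Γ⁻¹ * B = Γ⁻¹ + (N + N + N * Γ * N) := by
    have hBt : Bᵀ = 1 + N * Γ := by
      rw [hB, Matrix.transpose_add, Matrix.transpose_one, Matrix.transpose_mul, hNt, hΓt]
    have e1 : (1 + N * Γ) * Γ⁻¹ = Γ⁻¹ + N := by
      rw [add_mul, one_mul, mul_assoc, hΓΓinv, mul_one]
    have e2 : (Γ⁻¹ + N) * (1 + Γ * N) = Γ⁻¹ + N + (N + N * Γ * N) := by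
      rw [mul_add, mul_one, add_mul, ← Matrix.mul_assoc Γ⁻¹ Γ N, hΓinvΓ, one_mul,
        ← Matrix.mul_assoc N Γ N]
    rw [hBt, e1, hB, e2]
    abel
  have key : Γ⁻¹ - Aᵀ * Γ⁻¹ * A = Aᵀ * (N + N + N * Γ * N) * A := by
    have hABt : Aᵀ * Bᵀ = 1 := by rw [← Matrix.transpose_mul, hBA, Matrix.transpose_one]
    have h1 : Aᵀ * (Bᵀ * Γ⁻¹ * B) * A = Γ⁻¹ := by
      calc Aᵀ * (Bᵀ * Γ⁻¹ * B) * A = (Aᵀ * Bᵀ) * Γ⁻¹ * (B * A) := by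
            simp only [Matrix.mul_assoc]
        _ = Γ⁻¹ := by rw [hABt, hBA, one_mul, mul_one]
    calc Γ⁻¹ - Aᵀ * Γ⁻¹ * A
        = Aᵀ * (Bᵀ * Γ⁻¹ * B) * A - Aᵀ * Γ⁻¹ * A := by rw [h1]
      _ = Aᵀ * ((Bᵀ * Γ⁻¹ * B) - Γ⁻¹) * A := by rw [Matrix.mul_sub, Matrix.sub_mul]
      _ = Aᵀ * (N + N + N * Γ * N) * A := by rw [hmid, add_sub_cancel_left]
  have hpsd_mid : (N + N + N * Γ * N).PosSemidef := by
    have h1 : (N * Γ * N).PosSemidef := by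
      have := hΓ.posSemidef.mul_mul_conjTranspose_same N
      simpa [Matrix.conjTranspose_eq_transpose_of_trivial, hNt] using this
    exact (hN.add hN).add h1
  have hpsd : (Γ⁻¹ - Aᵀ * Γ⁻¹ * A).PosSemidef := by
    rw [key]
    have := hpsd_mid.conjTranspose_mul_mul_same A
    simpa [Matrix.conjTranspose_eq_transpose_of_trivial] using this
  refine ⟨hU, ?_, hpsd⟩
  intro x
  have h0 := hpsd.dotProduct_mulVec_nonneg x
  have hexp : star x ⬝ᵥ ((Γ⁻¹ - Aᵀ * Γ⁻¹ * A) *ᵥ x)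
      = x ⬝ᵥ (Γ⁻¹ *ᵥ x) - (A *ᵥ x) ⬝ᵥ (Γ⁻¹ *ᵥ (A *ᵥ x)) := by
    simp only [Matrix.sub_mulVec, dotProduct_sub, star_trivial]
    congr 1
    rw [← Matrix.mulVec_mulVec, ← Matrix.mulVec_mulVec,
      Matrix.dotProduct_mulVec, Matrix.vecMul_transpose]
  rw [hexp] at h0
  linarith
end

section
/- Let R be a symmetric positive-definite real q×q matrix, let 0 < k_min < k₀ be real constants, and let (φ_t)_{t≥1} be any sequence of real p×q matrices. Define the covariance-resetting sequence: Γ₀ = k₀·I_p, and for t ≥ 1, Γ̄_t = Γ_{t−1} − Γ_{t−1}φ_t(R + φ_tᵀΓ_{t−1}φ_t)⁻¹φ_tᵀΓ_{t−1}, with Γ_t = k₀·I_p if λ_min[Γ̄_t] ≤ k_min, and Γ_t = Γ̄_t otherwise. Then for every t ≥ 0: Γ_t is symmetric positive definite, k₀·I_p − Γ_t is positive semi-definite (i.e., λ_max[Γ_t] ≤ k₀), and Γ_t − k_min·I_p is positive definite (i.e., λ_min[Γ_t] > k_min). -/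
open Matrix Pointwise

lemma smulOnePosDef {p : ℕ} {a : ℝ} (ha : 0 < a) :
    (a • (1 : Matrix (Fin p) (Fin p) ℝ)).PosDef := by
  rw [smul_one_eq_diagonal]
  exact posDef_diagonal_iff.mpr fun _ => ha

lemma posDefOfEig {n : Type*} [Fintype n] [DecidableEq n] {M : Matrix n n ℝ}
    (hM : M.IsHermitian) (h : ∀ i, 0 < hM.eigenvalues i) : M.PosDef := by
  exact hM.posDef_iff_eigenvalues_pos.mpr h

lemma keyLem {p : ℕ} {M : Matrix (Fin p) (Fin p) ℝ} (hM : M.IsHermitian) {c : ℝ}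
    (hc : ∀ μ ∈ spectrum ℝ M, c < μ) :
    (M - c • (1 : Matrix (Fin p) (Fin p) ℝ)).PosDef := by
  have hN : (M - c • (1 : Matrix (Fin p) (Fin p) ℝ)).IsHermitian := by
    refine hM.sub ?_
    simp [Matrix.IsHermitian]
  apply posDefOfEig hN
  intro i
  have hmem : hN.eigenvalues i ∈ spectrum ℝ M - ({c} : Set ℝ) := by
    rw [spectrum.sub_singleton_eq]
    have := hN.eigenvalues_mem_spectrum_real i
    rwa [show (algebraMap ℝ (Matrix (Fin p) (Fin p) ℝ)) c = c • (1 : Matrix (Fin p) (Fin p) ℝ)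
      from Algebra.algebraMap_eq_smul_one c]
  obtain ⟨μ, hμ, ν, hν, hEq⟩ := Set.mem_sub.mp hmem
  simp only [Set.mem_singleton_iff] at hν
  subst hν
  rw [← hEq]
  linarith [hc μ hμ]


/-- The smallest eigenvalue of a (symmetric) real matrix, realized as the infimum of its
real spectrum. -/
noncomputable def lambdaMin {p : ℕ} (M : Matrix (Fin p) (Fin p) ℝ) : ℝ :=
  sInf (spectrum ℝ M)

/-- The covariance-resetting RLS covariance sequence
`Γ₀ = k₀ I`, `Γ̄_t = Γ_{t−1} − Γ_{t−1}φ_t(R + φ_tᵀΓ_{t−1}φ_t)⁻¹φ_tᵀΓ_{t−1}`,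
`Γ_t = k₀ I` if `λ_min[Γ̄_t] ≤ k_min`, else `Γ_t = Γ̄_t`, is symmetric positive definite
for every `t`, with `λ_max[Γ_t] ≤ k₀` (i.e. `k₀ I − Γ_t ⪰ 0`) and `λ_min[Γ_t] > k_min`
(i.e. `Γ_t − k_min I ≻ 0`). -/
theorem stmt10 {p q : ℕ} (R : Matrix (Fin q) (Fin q) ℝ) (hR : R.PosDef)
    (kmin k₀ : ℝ) (hkmin : 0 < kmin) (hk : kmin < k₀)
    (φ : ℕ → Matrix (Fin p) (Fin q) ℝ)
    (Γ Γbar : ℕ → Matrix (Fin p) (Fin p) ℝ)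
    (hΓ0 : Γ 0 = k₀ • (1 : Matrix (Fin p) (Fin p) ℝ))
    (hbar : ∀ t : ℕ, Γbar (t + 1) =
      Γ t - Γ t * φ (t + 1) * (R + (φ (t + 1))ᵀ * Γ t * φ (t + 1))⁻¹ * (φ (t + 1))ᵀ * Γ t)
    (hreset : ∀ t : ℕ, Γ (t + 1) =
      if lambdaMin (Γbar (t + 1)) ≤ kmin then k₀ • (1 : Matrix (Fin p) (Fin p) ℝ)
      else Γbar (t + 1)) :
    ∀ t : ℕ, (Γ t).PosDef ∧
      (k₀ • (1 : Matrix (Fin p) (Fin p) ℝ) - Γ t).PosSemidef ∧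
      (Γ t - kmin • (1 : Matrix (Fin p) (Fin p) ℝ)).PosDef := by
  intro t
  induction t with
  | zero =>
    rw [hΓ0]
    refine ⟨smulOnePosDef (hkmin.trans hk), by simpa using Matrix.PosSemidef.zero, ?_⟩
    rw [← sub_smul]
    exact smulOnePosDef (by linarith)
  | succ t ih =>
    obtain ⟨hPD, hUB, hLB⟩ := ih
    have hΓsym : (Γ t)ᵀ = Γ t := by
      have := hPD.isHermitian
      rwa [Matrix.IsHermitian, conjTranspose_eq_transpose_of_trivial] at this
    -- S is positive definite
    have hS : (R + (φ (t + 1))ᵀ * Γ t * φ (t + 1)).PosDef := by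
      refine hR.add_posSemidef ?_
      have := hPD.posSemidef.conjTranspose_mul_mul_same (φ (t + 1))
      rwa [conjTranspose_eq_transpose_of_trivial] at this
    -- the correction term K is positive semidefinite
    have hK : (Γ t * φ (t + 1) * (R + (φ (t + 1))ᵀ * Γ t * φ (t + 1))⁻¹
        * (φ (t + 1))ᵀ * Γ t).PosSemidef := by
      have := hS.inv.posSemidef.conjTranspose_mul_mul_same ((φ (t + 1))ᵀ * Γ t)
      rw [conjTranspose_eq_transpose_of_trivial, transpose_mul, transpose_transpose,
        hΓsym] at this
      simpa only [Matrix.mul_assoc] using this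
    have hKsym : (Γ t * φ (t + 1) * (R + (φ (t + 1))ᵀ * Γ t * φ (t + 1))⁻¹
        * (φ (t + 1))ᵀ * Γ t)ᵀ = Γ t * φ (t + 1) * (R + (φ (t + 1))ᵀ * Γ t * φ (t + 1))⁻¹
        * (φ (t + 1))ᵀ * Γ t := by
      have := hK.isHermitian
      rwa [Matrix.IsHermitian, conjTranspose_eq_transpose_of_trivial] at this
    -- Γbar is hermitian
    have hbarHerm : (Γbar (t + 1)).IsHermitian := by
      rw [hbar t, Matrix.IsHermitian, conjTranspose_eq_transpose_of_trivial,
        transpose_sub, hΓsym, hKsym]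
    -- k₀ • 1 - Γbar is PSD
    have hUBbar : (k₀ • (1 : Matrix (Fin p) (Fin p) ℝ) - Γbar (t + 1)).PosSemidef := by
      have heq : k₀ • (1 : Matrix (Fin p) (Fin p) ℝ) - Γbar (t + 1)
          = (k₀ • (1 : Matrix (Fin p) (Fin p) ℝ) - Γ t)
            + Γ t * φ (t + 1) * (R + (φ (t + 1))ᵀ * Γ t * φ (t + 1))⁻¹
              * (φ (t + 1))ᵀ * Γ t := by
        rw [hbar t]; abel
      rw [heq]
      exact hUB.add hK
    rw [hreset t]
    by_cases hcond : lambdaMin (Γbar (t + 1)) ≤ kmin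
    · rw [if_pos hcond]
      refine ⟨smulOnePosDef (hkmin.trans hk), by simpa using Matrix.PosSemidef.zero, ?_⟩
      rw [← sub_smul]
      exact smulOnePosDef (by linarith)
    · rw [if_neg hcond]
      push_neg at hcond
      rw [lambdaMin] at hcond
      have hspec : ∀ μ ∈ spectrum ℝ (Γbar (t + 1)), kmin < μ := by
        intro μ hμ
        exact hcond.trans_le (csInf_le (Matrix.finite_spectrum _).bddBelow hμ)
      have hLBnew := keyLem hbarHerm hspec
      refine ⟨?_, hUBbar, hLBnew⟩
      have : Γbar (t + 1) = (Γbar (t + 1) - kmin • (1 : Matrix (Fin p) (Fin p) ℝ))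
          + kmin • (1 : Matrix (Fin p) (Fin p) ℝ) := by abel
      rw [this]
      exact hLBnew.add (smulOnePosDef hkmin)
end

section
/- (Boundedness of the adaptive-observer parameter estimation error, Theorem 4.) Let R be a symmetric positive-definite real q×q matrix, 0 < k_min < k₀ real constants, (φ_t)_{t≥1} a bounded sequence of real p×q matrices, C a real q×n matrix, x̃₀ ∈ ℝⁿ, and F a real n×n matrix such that ‖Fᵏ‖ ≤ M·cᵏ for all k ≥ 0 with constants M ≥ 0 and 0 ≤ c < 1. Define Γ₀ = k₀·I_p and for t ≥ 1: Γ̄_t = Γ_{t−1} − Γ_{t−1}φ_t W_t φ_tᵀΓ_{t−1} with W_t = (R + φ_tᵀΓ_{t−1}φ_t)⁻¹, and Γ_t = k₀·I_p if λ_min[Γ̄_t] ≤ k_min and Γ_t = Γ̄_t otherwise. Let (p̃_t)_{t≥0} satisfy p̃_{t+1} = p̃_t − Γ_t φ_{t+1} W_{t+1} (φ_{t+1}ᵀ p̃_t + C F^{t+1} x̃₀) for all t ≥ 0, with arbitrary p̃₀ ∈ ℝᵖ. Then the sequence (p̃_t) is bounded: there exists β < ∞ with ‖p̃_t‖ ≤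 β for all t ≥ 0. -/
open Matrix
open scoped Matrix.Norms.L2Operator

/-- The Euclidean norm of a vector in `ℝᵏ`. -/
noncomputable def evnorm {k : ℕ} (v : Fin k → ℝ) : ℝ :=
  ‖(EuclideanSpace.equiv (Fin k) ℝ).symm v‖

section Aux

open scoped MatrixOrder

lemma evnorm_nonneg {k : ℕ} (v : Fin k → ℝ) : 0 ≤ evnorm v := norm_nonneg _

lemma sqrt_dotProduct_self {k : ℕ} (v : Fin k → ℝ) : Real.sqrt (v ⬝ᵥ v) = evnorm v := by
  unfold evnorm
  rw [EuclideanSpace.norm_eq]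
  congr 1
  simp [dotProduct, Real.norm_eq_abs, sq_abs, pow_two]

lemma evnorm_sub_le {k : ℕ} (u v : Fin k → ℝ) : evnorm (u - v) ≤ evnorm u + evnorm v := by
  unfold evnorm
  rw [map_sub]
  exact norm_sub_le _ _

lemma evnorm_mulVec_le {a b : ℕ} (A : Matrix (Fin a) (Fin b) ℝ) (v : Fin b → ℝ) :
    evnorm (A *ᵥ v) ≤ ‖A‖ * evnorm v :=
  Matrix.l2_opNorm_mulVec A ((EuclideanSpace.equiv (Fin b) ℝ).symm v)

lemma psd_quad_nonneg {k : ℕ} {A : Matrix (Fin k) (Fin k) ℝ} (hA : A.PosSemidef)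
    (x : Fin k → ℝ) : 0 ≤ x ⬝ᵥ (A *ᵥ x) := by simpa using hA.dotProduct_mulVec_nonneg x

lemma herm_transpose_eq {k : ℕ} {A : Matrix (Fin k) (Fin k) ℝ} (hA : A.IsHermitian) :
    Aᵀ = A := by rwa [← conjTranspose_eq_transpose_of_trivial]

lemma dp_shift {a b : ℕ} (A : Matrix (Fin a) (Fin b) ℝ) (x : Fin a → ℝ) (y : Fin b → ℝ) :
    x ⬝ᵥ (A *ᵥ y) = (Aᵀ *ᵥ x) ⬝ᵥ y := by
  rw [dotProduct_mulVec, mulVec_transpose]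

lemma posDef_smul_one {k : ℕ} {c : ℝ} (hc : 0 < c) :
    (c • (1 : Matrix (Fin k) (Fin k) ℝ)).PosDef := by
  refine posDef_iff_dotProduct_mulVec.mpr ⟨?_, ?_⟩
  · simp [Matrix.IsHermitian]
  · intro x hx
    have : x ⬝ᵥ ((c • (1 : Matrix (Fin k) (Fin k) ℝ)) *ᵥ x) = c * (x ⬝ᵥ x) := by
      simp [smul_mulVec, one_mulVec, dotProduct_smul, smul_eq_mul]
    simp only [star_trivial]
    rw [this]
    exact mul_pos hc (by rwa [show x ⬝ᵥ x = star x ⬝ᵥ x by simp, dotProduct_star_self_pos_iff])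

lemma smul_one_inv {k : ℕ} {c : ℝ} (hc : c ≠ 0) :
    (c • (1 : Matrix (Fin k) (Fin k) ℝ))⁻¹ = c⁻¹ • (1 : Matrix (Fin k) (Fin k) ℝ) := by
  apply Matrix.inv_eq_left_inv
  rw [Matrix.smul_mul, Matrix.one_mul, smul_smul, inv_mul_cancel₀ hc, one_smul]

/-- quadratic form via the psd square root -/
lemma quad_eq_sqrt {k : ℕ} {A : Matrix (Fin k) (Fin k) ℝ} (hA : A.PosSemidef)
    (x : Fin k → ℝ) : x ⬝ᵥ (A *ᵥ x) = (CFC.sqrt A *ᵥ x) ⬝ᵥ (CFC.sqrt A *ᵥ x) := by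
  conv_lhs => rw [← CFC.sqrt_mul_sqrt_self A hA.nonneg]
  rw [← mulVec_mulVec, dp_shift, herm_transpose_eq (CFC.sqrt_nonneg A).posSemidef.isHermitian]

/-- `‖Bx‖² ≤ c·xᵀBx` for psd `B ≤ c I`. -/
lemma quad_sq_le {k : ℕ} {B : Matrix (Fin k) (Fin k) ℝ} {c : ℝ} (hB : B.PosSemidef)
    (hBc : (c • (1 : Matrix (Fin k) (Fin k) ℝ) - B).PosSemidef) (x : Fin k → ℝ) :
    (B *ᵥ x) ⬝ᵥ (B *ᵥ x) ≤ c * (x ⬝ᵥ (B *ᵥ x)) := by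
  set S := CFC.sqrt B with hS
  set y := S *ᵥ x with hy
  have hBx : B *ᵥ x = S *ᵥ y := by rw [hy, mulVec_mulVec, CFC.sqrt_mul_sqrt_self B hB.nonneg]
  have h1 : (B *ᵥ x) ⬝ᵥ (B *ᵥ x) = y ⬝ᵥ (B *ᵥ y) := by
    rw [hBx, quad_eq_sqrt hB y]
  have h2 : 0 ≤ y ⬝ᵥ ((c • (1 : Matrix (Fin k) (Fin k) ℝ) - B) *ᵥ y) := psd_quad_nonneg hBc y
  have h3 : y ⬝ᵥ ((c • (1 : Matrix (Fin k) (Fin k) ℝ) - B) *ᵥ y)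
      = c * (y ⬝ᵥ y) - y ⬝ᵥ (B *ᵥ y) := by
    rw [sub_mulVec, dotProduct_sub, smul_mulVec, one_mulVec, dotProduct_smul, smul_eq_mul]
  have h4 : y ⬝ᵥ y = x ⬝ᵥ (B *ᵥ x) := (quad_eq_sqrt hB x).symm
  rw [h4] at h3
  rw [h1]
  linarith

/-- monotonicity of quadratic forms -/
lemma quad_mono {k : ℕ} {A B : Matrix (Fin k) (Fin k) ℝ} (h : (A - B).PosSemidef)
    (x : Fin k → ℝ) : x ⬝ᵥ (B *ᵥ x) ≤ x ⬝ᵥ (A *ᵥ x) := by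
  have := psd_quad_nonneg h x
  rw [sub_mulVec, dotProduct_sub] at this
  linarith

/-- triangle inequality for the seminorm induced by a psd matrix -/
lemma quad_sqrt_triangle {k : ℕ} {G : Matrix (Fin k) (Fin k) ℝ} (hG : G.PosSemidef)
    (a b : Fin k → ℝ) :
    Real.sqrt ((a - b) ⬝ᵥ (G *ᵥ (a - b))) ≤
      Real.sqrt (a ⬝ᵥ (G *ᵥ a)) + Real.sqrt (b ⬝ᵥ (G *ᵥ b)) := by
  rw [quad_eq_sqrt hG, quad_eq_sqrt hG a, quad_eq_sqrt hG b,
    sqrt_dotProduct_self, sqrt_dotProduct_self, sqrt_dotProduct_self, mulVec_sub]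
  exact evnorm_sub_le _ _

/-- All the matrix algebra facts for one RLS step. -/
lemma rls_step {p q : ℕ} {R : Matrix (Fin q) (Fin q) ℝ} (hR : R.PosDef) {k₀ : ℝ}
    {G : Matrix (Fin p) (Fin p) ℝ} (hG : G.PosDef)
    (hGk : (k₀ • (1 : Matrix (Fin p) (Fin p) ℝ) - G).PosSemidef)
    (Φ : Matrix (Fin p) (Fin q) ℝ)
    (W : Matrix (Fin q) (Fin q) ℝ) (B : Matrix (Fin p) (Fin p) ℝ)
    (hWdef : W = (R + Φᵀ * G * Φ)⁻¹) (hBdef : B = G - G * Φ * W * Φᵀ * G) :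
    B.PosDef ∧ (k₀ • (1 : Matrix (Fin p) (Fin p) ℝ) - B).PosSemidef ∧
      (G - B).PosSemidef ∧ B * G⁻¹ = 1 - G * Φ * W * Φᵀ ∧ B * (Φ * R⁻¹) = G * Φ * W := by
  have hΦGΦ : (Φᵀ * G * Φ).PosSemidef := by
    have := hG.posSemidef.conjTranspose_mul_mul_same Φ
    rwa [conjTranspose_eq_transpose_of_trivial] at this
  have hA : (R + Φᵀ * G * Φ).PosDef := hR.add_posSemidef hΦGΦ
  have hAdet : IsUnit (R + Φᵀ * G * Φ).det := hA.det_pos.ne'.isUnit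
  have hWA : W * (R + Φᵀ * G * Φ) = 1 := by rw [hWdef]; exact nonsing_inv_mul _ hAdet
  have hRR : R * R⁻¹ = 1 := mul_nonsing_inv _ hR.det_pos.ne'.isUnit
  have hGG : G * G⁻¹ = 1 := mul_nonsing_inv _ hG.det_pos.ne'.isUnit
  have hWR : W * R = 1 - W * (Φᵀ * G * Φ) := by
    rw [mul_add] at hWA
    exact eq_sub_of_add_eq hWA
  have key1 : B * Φ = G * Φ * (W * R) := by
    rw [hBdef, hWR, Matrix.sub_mul, Matrix.mul_sub, Matrix.mul_one]
    simp only [Matrix.mul_assoc]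
  have key2 : B * (Φ * R⁻¹) = G * Φ * W := by
    calc B * (Φ * R⁻¹) = (B * Φ) * R⁻¹ := by rw [Matrix.mul_assoc]
    _ = G * Φ * (W * (R * R⁻¹)) := by rw [key1]; simp only [Matrix.mul_assoc]
    _ = G * Φ * W := by rw [hRR, Matrix.mul_one]
  have key3 : B * G⁻¹ = 1 - G * Φ * W * Φᵀ := by
    rw [hBdef, Matrix.sub_mul]
    simp only [Matrix.mul_assoc]
    rw [hGG, Matrix.mul_one]
  have key4 : B * (G⁻¹ + Φ * R⁻¹ * Φᵀ) = 1 := by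
    rw [Matrix.mul_add, key3, ← Matrix.mul_assoc B (Φ * R⁻¹) Φᵀ, key2]
    abel
  have hRinv : (R⁻¹).PosDef := hR.inv
  have hK : (G⁻¹ + Φ * R⁻¹ * Φᵀ).PosDef := by
    refine hG.inv.add_posSemidef ?_
    have := hRinv.posSemidef.mul_mul_conjTranspose_same Φ
    rwa [conjTranspose_eq_transpose_of_trivial] at this
  have hKinv : (G⁻¹ + Φ * R⁻¹ * Φᵀ)⁻¹ = B := Matrix.inv_eq_left_inv key4
  have hBpd : B.PosDef := hKinv ▸ hK.inv
  have hGB : (G - B).PosSemidef := by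
    have h1 : G - B = (G * Φ) * W * (G * Φ)ᵀ := by
      rw [hBdef, sub_sub_cancel, transpose_mul, herm_transpose_eq hG.isHermitian]
      simp only [Matrix.mul_assoc]
    have hWpd : W.PosDef := hWdef ▸ hA.inv
    have := hWpd.posSemidef.mul_mul_conjTranspose_same (G * Φ)
    rw [conjTranspose_eq_transpose_of_trivial] at this
    rwa [h1]
  refine ⟨hBpd, ?_, hGB, key3, key2⟩
  have : k₀ • (1 : Matrix (Fin p) (Fin p) ℝ) - B
      = (k₀ • (1 : Matrix (Fin p) (Fin p) ℝ) - G) + (G - B) := by abel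
  rw [this]
  exact hGk.add hGB

lemma geom_tail_le {c : ℝ} (hc0 : 0 ≤ c) (hc1 : c < 1) (t : ℕ) :
    ∑ i ∈ Finset.range t, c ^ (i + 1) ≤ (1 - c)⁻¹ := by
  have hd : 0 < 1 - c := by linarith
  have hgeom : ∑ i ∈ Finset.range t, c ^ i ≤ (1 - c)⁻¹ := by
    rw [geom_sum_eq (by linarith : c ≠ 1)]
    rw [show (c ^ t - 1) / (c - 1) = (1 - c ^ t) / (1 - c) by
      rw [← neg_div_neg_eq]; ring_nf]
    rw [div_le_iff₀ hd, inv_mul_cancel₀ hd.ne']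
    have := pow_nonneg hc0 t
    linarith
  have h1 : ∑ i ∈ Finset.range t, c ^ (i + 1) = c * ∑ i ∈ Finset.range t, c ^ i := by
    rw [Finset.mul_sum]
    exact Finset.sum_congr rfl fun i _ => by ring
  rw [h1]
  calc c * ∑ i ∈ Finset.range t, c ^ i ≤ c * (1 - c)⁻¹ := by
        apply mul_le_mul_of_nonneg_left hgeom hc0
  _ ≤ 1 * (1 - c)⁻¹ := by
        apply mul_le_mul_of_nonneg_right hc1.le (inv_nonneg.mpr hd.le)
  _ = (1 - c)⁻¹ := one_mul _

end Aux

/-- **Theorem 4: boundedness of the parameter estimation error.**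
With positive-definite `R`, `0 < k_min < k₀`, a bounded regressor sequence `(φ_t)`, a Schur
stable `F` (`‖Fᵏ‖ ≤ M cᵏ`, `0 ≤ c < 1`), the covariance-resetting RLS covariance `Γ_t` and
gain `W_t = (R + φ_tᵀΓ_{t−1}φ_t)⁻¹`, any solution of
`p̃_{t+1} = p̃_t − Γ_t φ_{t+1} W_{t+1} (φ_{t+1}ᵀ p̃_t + C F^{t+1} x̃₀)` is bounded. -/
theorem stmt13 {p q n : ℕ} (R : Matrix (Fin q) (Fin q) ℝ) (hR : R.PosDef)
    (kmin k₀ : ℝ) (hkmin : 0 < kmin) (hk : kmin < k₀)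
    (φ : ℕ → Matrix (Fin p) (Fin q) ℝ) (hφbdd : ∃ βφ : ℝ, ∀ t : ℕ, ‖φ t‖ ≤ βφ)
    (C : Matrix (Fin q) (Fin n) ℝ) (xtil0 : Fin n → ℝ)
    (F : Matrix (Fin n) (Fin n) ℝ) (M c : ℝ) (hM : 0 ≤ M) (hc0 : 0 ≤ c) (hc1 : c < 1)
    (hF : ∀ k : ℕ, ‖F ^ k‖ ≤ M * c ^ k)
    (Γ Γbar : ℕ → Matrix (Fin p) (Fin p) ℝ) (W : ℕ → Matrix (Fin q) (Fin q) ℝ)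
    (hΓ0 : Γ 0 = k₀ • (1 : Matrix (Fin p) (Fin p) ℝ))
    (hW : ∀ t : ℕ, W (t + 1) = (R + (φ (t + 1))ᵀ * Γ t * φ (t + 1))⁻¹)
    (hbar : ∀ t : ℕ, Γbar (t + 1) = Γ t - Γ t * φ (t + 1) * W (t + 1) * (φ (t + 1))ᵀ * Γ t)
    (hreset : ∀ t : ℕ, Γ (t + 1) =
      if lambdaMin (Γbar (t + 1)) ≤ kmin then k₀ • (1 : Matrix (Fin p) (Fin p) ℝ)
      else Γbar (t + 1))
    (ptil : ℕ → Fin p → ℝ)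
    (hptil : ∀ t : ℕ, ptil (t + 1) =
      ptil t - (Γ t * φ (t + 1) * W (t + 1)) *ᵥ
        ((φ (t + 1))ᵀ *ᵥ ptil t + (C * F ^ (t + 1)) *ᵥ xtil0)) :
    ∃ β : ℝ, ∀ t : ℕ, evnorm (ptil t) ≤ β := by
  obtain ⟨βφ, hβφ⟩ := hφbdd
  have hβφ0 : 0 ≤ βφ := le_trans (norm_nonneg _) (hβφ 0)
  have hk₀ : 0 < k₀ := hkmin.trans hk
  -- the invariant: Γ t is positive definite and bounded above by k₀ I
  have hInv : ∀ t, (Γ t).PosDef ∧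
      (k₀ • (1 : Matrix (Fin p) (Fin p) ℝ) - Γ t).PosSemidef := by
    intro t
    induction t with
    | zero =>
        rw [hΓ0]
        exact ⟨posDef_smul_one hk₀, by rw [sub_self]; exact .zero⟩
    | succ t ih =>
        obtain ⟨hG, hGk⟩ := ih
        obtain ⟨hB, hBk, -, -, -⟩ :=
          rls_step hR hG hGk (φ (t + 1)) (W (t + 1)) (Γbar (t + 1)) (hW t) (hbar t)
        rw [hreset t]
        split_ifs
        · exact ⟨posDef_smul_one hk₀, by rw [sub_self]; exact .zero⟩
        · exact ⟨hB, hBk⟩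
  -- Lyapunov function
  set V : ℕ → ℝ := fun t => ptil t ⬝ᵥ ((Γ t)⁻¹ *ᵥ ptil t) with hV
  set w : ℕ → ℝ := fun t => Real.sqrt (V t) with hw
  set D : ℝ := Real.sqrt k₀ * ((βφ * ‖R⁻¹‖) * (‖C‖ * (M * evnorm xtil0))) with hD
  have hD0 : 0 ≤ D := by
    apply mul_nonneg (Real.sqrt_nonneg _)
    apply mul_nonneg (mul_nonneg hβφ0 (norm_nonneg _))
    exact mul_nonneg (norm_nonneg _) (mul_nonneg hM (evnorm_nonneg _))
  -- one-step estimate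
  have hstep : ∀ t, w (t + 1) ≤ w t + D * c ^ (t + 1) := by
    intro t
    obtain ⟨hG, hGk⟩ := hInv t
    obtain ⟨hB, hBk, hGB, hBGinv, hBΦR⟩ :=
      rls_step hR hG hGk (φ (t + 1)) (W (t + 1)) (Γbar (t + 1)) (hW t) (hbar t)
    have hGG : Γ t * (Γ t)⁻¹ = 1 := mul_nonsing_inv _ hG.det_pos.ne'.isUnit
    set η : Fin q → ℝ := (C * F ^ (t + 1)) *ᵥ xtil0 with hη
    set a : Fin p → ℝ := (Γ t)⁻¹ *ᵥ ptil t with ha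
    set b : Fin p → ℝ := (φ (t + 1) * R⁻¹) *ᵥ η with hb
    -- closed form for the next error
    have hptil' : ptil (t + 1) = Γbar (t + 1) *ᵥ (a - b) := by
      rw [hptil t, mulVec_sub, ha, hb, mulVec_mulVec, mulVec_mulVec, hBGinv, hBΦR,
        sub_mulVec, one_mulVec, mulVec_add, mulVec_mulVec]
      abel
    -- V (t+1) ≤ (a-b)ᵀ Γbar (a-b)
    have hVle : V (t + 1) ≤ (a - b) ⬝ᵥ (Γbar (t + 1) *ᵥ (a - b)) := by
      show ptil (t + 1) ⬝ᵥ ((Γ (t + 1))⁻¹ *ᵥ ptil (t + 1)) ≤ _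
      rw [hreset t]
      split_ifs with hcond
      · rw [hptil', smul_one_inv hk₀.ne', smul_mulVec, one_mulVec, dotProduct_smul,
          smul_eq_mul]
        have h2 := quad_sq_le hB.posSemidef hBk (a - b)
        calc k₀⁻¹ * ((Γbar (t + 1) *ᵥ (a - b)) ⬝ᵥ (Γbar (t + 1) *ᵥ (a - b)))
            ≤ k₀⁻¹ * (k₀ * ((a - b) ⬝ᵥ (Γbar (t + 1) *ᵥ (a - b)))) :=
              mul_le_mul_of_nonneg_left h2 (inv_nonneg.mpr hk₀.le)
        _ = (a - b) ⬝ᵥ (Γbar (t + 1) *ᵥ (a - b)) := by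
              rw [← mul_assoc, inv_mul_cancel₀ hk₀.ne', one_mul]
      · rw [hptil', mulVec_mulVec, nonsing_inv_mul _ hB.det_pos.ne'.isUnit, one_mulVec]
        exact le_of_eq (dotProduct_comm _ _)
    have h5 : (a - b) ⬝ᵥ (Γbar (t + 1) *ᵥ (a - b)) ≤ (a - b) ⬝ᵥ (Γ t *ᵥ (a - b)) :=
      quad_mono hGB _
    have h6 := quad_sqrt_triangle hG.posSemidef a b
    have haV : a ⬝ᵥ (Γ t *ᵥ a) = V t := by
      have h7 : Γ t *ᵥ a = ptil t := by rw [ha, mulVec_mulVec, hGG, one_mulVec]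
      rw [h7, dotProduct_comm]
    have hbb : b ⬝ᵥ (Γ t *ᵥ b) ≤ k₀ * (b ⬝ᵥ b) := by
      have h8 := psd_quad_nonneg hGk b
      rw [sub_mulVec, dotProduct_sub, smul_mulVec, one_mulVec, dotProduct_smul,
        smul_eq_mul] at h8
      linarith
    have hsqb : Real.sqrt (b ⬝ᵥ (Γ t *ᵥ b)) ≤ Real.sqrt k₀ * evnorm b := by
      calc Real.sqrt (b ⬝ᵥ (Γ t *ᵥ b)) ≤ Real.sqrt (k₀ * (b ⬝ᵥ b)) := Real.sqrt_le_sqrt hbb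
      _ = Real.sqrt k₀ * Real.sqrt (b ⬝ᵥ b) := Real.sqrt_mul hk₀.le _
      _ = Real.sqrt k₀ * evnorm b := by rw [sqrt_dotProduct_self]
    -- bound on the disturbance term
    have hηn : evnorm η ≤ ‖C‖ * ((M * c ^ (t + 1)) * evnorm xtil0) := by
      calc evnorm η ≤ ‖C * F ^ (t + 1)‖ * evnorm xtil0 := evnorm_mulVec_le _ _
      _ ≤ (‖C‖ * ‖F ^ (t + 1)‖) * evnorm xtil0 := by
            apply mul_le_mul_of_nonneg_right (Matrix.l2_opNorm_mul _ _) (evnorm_nonneg _)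
      _ ≤ (‖C‖ * (M * c ^ (t + 1))) * evnorm xtil0 := by
            apply mul_le_mul_of_nonneg_right _ (evnorm_nonneg _)
            exact mul_le_mul_of_nonneg_left (hF (t + 1)) (norm_nonneg _)
      _ = ‖C‖ * ((M * c ^ (t + 1)) * evnorm xtil0) := by ring
    have hbn : evnorm b ≤ (βφ * ‖R⁻¹‖) * (‖C‖ * ((M * c ^ (t + 1)) * evnorm xtil0)) := by
      calc evnorm b ≤ ‖φ (t + 1) * R⁻¹‖ * evnorm η := evnorm_mulVec_le _ _
      _ ≤ (‖φ (t + 1)‖ * ‖R⁻¹‖) * evnorm η := by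
            apply mul_le_mul_of_nonneg_right (Matrix.l2_opNorm_mul _ _) (evnorm_nonneg _)
      _ ≤ (βφ * ‖R⁻¹‖) * (‖C‖ * ((M * c ^ (t + 1)) * evnorm xtil0)) := by
            apply mul_le_mul
            · exact mul_le_mul_of_nonneg_right (hβφ (t + 1)) (norm_nonneg _)
            · exact hηn
            · exact evnorm_nonneg _
            · exact mul_nonneg hβφ0 (norm_nonneg _)
    -- put everything together
    have hwche : w (t + 1) ≤ Real.sqrt (V t) + Real.sqrt k₀ * evnorm b := by
      calc w (t + 1) = Real.sqrt (V (t + 1)) := rfl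
      _ ≤ Real.sqrt ((a - b) ⬝ᵥ (Γ t *ᵥ (a - b))) := Real.sqrt_le_sqrt (hVle.trans h5)
      _ ≤ Real.sqrt (a ⬝ᵥ (Γ t *ᵥ a)) + Real.sqrt (b ⬝ᵥ (Γ t *ᵥ b)) := h6
      _ ≤ Real.sqrt (V t) + Real.sqrt k₀ * evnorm b := by
            rw [haV]
            exact add_le_add_right hsqb _
    have hfinal : Real.sqrt k₀ * evnorm b ≤ D * c ^ (t + 1) := by
      calc Real.sqrt k₀ * evnorm b
          ≤ Real.sqrt k₀ * ((βφ * ‖R⁻¹‖) * (‖C‖ * ((M * c ^ (t + 1)) * evnorm xtil0))) :=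
            mul_le_mul_of_nonneg_left hbn (Real.sqrt_nonneg _)
      _ = D * c ^ (t + 1) := by rw [hD]; ring
    calc w (t + 1) ≤ Real.sqrt (V t) + Real.sqrt k₀ * evnorm b := hwche
    _ ≤ w t + D * c ^ (t + 1) := add_le_add_right hfinal _
  -- summing up the one-step estimates
  have hwbound : ∀ t, w t ≤ w 0 + D * (1 - c)⁻¹ := by
    have hsum : ∀ t, w t ≤ w 0 + D * ∑ i ∈ Finset.range t, c ^ (i + 1) := by
      intro t
      induction t with
      | zero => simp
      | succ t ih =>
          calc w (t + 1) ≤ w t + D * c ^ (t + 1) := hstep t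
          _ ≤ w 0 + D * ∑ i ∈ Finset.range t, c ^ (i + 1) + D * c ^ (t + 1) :=
              add_le_add_left ih _
          _ = w 0 + D * ∑ i ∈ Finset.range (t + 1), c ^ (i + 1) := by
              rw [Finset.sum_range_succ]; ring
    intro t
    refine (hsum t).trans (add_le_add_right ?_ _)
    exact mul_le_mul_of_nonneg_left (geom_tail_le hc0 hc1 t) hD0
  -- from the Lyapunov function back to the norm
  have hfin : ∀ t, evnorm (ptil t) ≤ Real.sqrt k₀ * w t := by
    intro t
    obtain ⟨hG, hGk⟩ := hInv t
    have hGG : Γ t * (Γ t)⁻¹ = 1 := mul_nonsing_inv _ hG.det_pos.ne'.isUnit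
    set x : Fin p → ℝ := (Γ t)⁻¹ *ᵥ ptil t with hx
    have hpt : Γ t *ᵥ x = ptil t := by rw [hx, mulVec_mulVec, hGG, one_mulVec]
    have h1 : ptil t ⬝ᵥ ptil t ≤ k₀ * (x ⬝ᵥ (Γ t *ᵥ x)) := by
      rw [← hpt]
      exact quad_sq_le hG.posSemidef hGk x
    have h2 : x ⬝ᵥ (Γ t *ᵥ x) = V t := by rw [hpt, dotProduct_comm]
    calc evnorm (ptil t) = Real.sqrt (ptil t ⬝ᵥ ptil t) := (sqrt_dotProduct_self _).symm
    _ ≤ Real.sqrt (k₀ * V t) := Real.sqrt_le_sqrt (by rw [← h2]; exact h1)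
    _ = Real.sqrt k₀ * w t := Real.sqrt_mul hk₀.le _
  refine ⟨Real.sqrt k₀ * (w 0 + D * (1 - c)⁻¹), fun t => ?_⟩
  exact (hfin t).trans (mul_le_mul_of_nonneg_left (hwbound t) (Real.sqrt_nonneg _))
end

section
/- (RLS Lyapunov decrement identity.) Let Γ be a symmetric positive-definite real p×p matrix, R a symmetric positive-definite real q×q matrix, φ a real p×q matrix, and p̃ ∈ ℝᵖ. Define W = (R + φᵀΓφ)⁻¹, the updated inverse covariance Γ₊⁻¹ = Γ⁻¹ + φR⁻¹φᵀ, and the updated error p̃₊ = p̃ − Γφ W φᵀ p̃. Then p̃₊ᵀ Γ₊⁻¹ p̃₊ = p̃ᵀ Γ⁻¹ p̃ − (φᵀp̃)ᵀ W (φᵀp̃). In particular, since W is positive definite, p̃₊ᵀ Γ₊⁻¹ p̃₊ ≤ p̃ᵀ Γ⁻¹ p̃. -/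
open Matrix

/-- **RLS Lyapunov decrement identity.** For `Γ`, `R` symmetric positive
definite, `φ` a `p × q` matrix, `p̃ ∈ ℝᵖ`, `W = (R + φᵀΓφ)⁻¹`, updated inverse covariance
`Γ₊⁻¹ = Γ⁻¹ + φR⁻¹φᵀ` and updated error `p̃₊ = p̃ − ΓφWφᵀp̃`, one has
`p̃₊ᵀ Γ₊⁻¹ p̃₊ = p̃ᵀ Γ⁻¹ p̃ − (φᵀp̃)ᵀ W (φᵀp̃)`, and in particular
`p̃₊ᵀ Γ₊⁻¹ p̃₊ ≤ p̃ᵀ Γ⁻¹ p̃`. -/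
theorem stmt14 {p q : ℕ} (Γ : Matrix (Fin p) (Fin p) ℝ) (R : Matrix (Fin q) (Fin q) ℝ)
    (hΓ : Γ.PosDef) (hR : R.PosDef) (φ : Matrix (Fin p) (Fin q) ℝ) (ptil : Fin p → ℝ) :
    (ptil - (Γ * φ * (R + φᵀ * Γ * φ)⁻¹) *ᵥ (φᵀ *ᵥ ptil)) ⬝ᵥ
        ((Γ⁻¹ + φ * R⁻¹ * φᵀ) *ᵥ (ptil - (Γ * φ * (R + φᵀ * Γ * φ)⁻¹) *ᵥ (φᵀ *ᵥ ptil))) =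
      ptil ⬝ᵥ (Γ⁻¹ *ᵥ ptil) - (φᵀ *ᵥ ptil) ⬝ᵥ ((R + φᵀ * Γ * φ)⁻¹ *ᵥ (φᵀ *ᵥ ptil)) ∧
    (ptil - (Γ * φ * (R + φᵀ * Γ * φ)⁻¹) *ᵥ (φᵀ *ᵥ ptil)) ⬝ᵥ
        ((Γ⁻¹ + φ * R⁻¹ * φᵀ) *ᵥ (ptil - (Γ * φ * (R + φᵀ * Γ * φ)⁻¹) *ᵥ (φᵀ *ᵥ ptil))) ≤
      ptil ⬝ᵥ (Γ⁻¹ *ᵥ ptil) := by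
  set S := R + φᵀ * Γ * φ with hSdef
  have hSpos : S.PosDef := by
    have h1 : (φᵀ * Γ * φ).PosSemidef := by
      have := hΓ.posSemidef.conjTranspose_mul_mul_same φ
      simpa using this
    exact hR.add_posSemidef h1
  have hSinv : S * S⁻¹ = 1 := mul_nonsing_inv S (isUnit_iff_ne_zero.mpr hSpos.det_pos.ne')
  have hSinv' : S⁻¹ * S = 1 := nonsing_inv_mul S (isUnit_iff_ne_zero.mpr hSpos.det_pos.ne')
  have hΓinv : Γ⁻¹ * Γ = 1 := nonsing_inv_mul Γ (isUnit_iff_ne_zero.mpr hΓ.det_pos.ne')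
  have hΓinv' : Γ * Γ⁻¹ = 1 := mul_nonsing_inv Γ (isUnit_iff_ne_zero.mpr hΓ.det_pos.ne')
  have hRinv : R⁻¹ * R = 1 := nonsing_inv_mul R (isUnit_iff_ne_zero.mpr hR.det_pos.ne')
  have hΓsym : Γᵀ = Γ := (by simpa using hΓ.isHermitian : Γ.IsSymm).eq
  have hSisym : S⁻¹ᵀ = S⁻¹ := (by simpa using hSpos.isHermitian.inv : S⁻¹.IsSymm).eq
  -- key algebra
  set B := φ * S⁻¹ * φᵀ with hBdef
  have hBsym : Bᵀ = B := by
    simp [hBdef, transpose_mul, hSisym, Matrix.mul_assoc]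
  have key1 : φ * R⁻¹ * φᵀ * (Γ * B) = φ * R⁻¹ * φᵀ - B := by
    have h2 : φᵀ * Γ * φ = S - R := by rw [hSdef]; abel
    calc φ * R⁻¹ * φᵀ * (Γ * B)
        = φ * R⁻¹ * (φᵀ * Γ * φ) * (S⁻¹ * φᵀ) := by rw [hBdef]; simp only [Matrix.mul_assoc]
      _ = φ * R⁻¹ * (S - R) * (S⁻¹ * φᵀ) := by rw [h2]
      _ = φ * (R⁻¹ * (S * S⁻¹)) * φᵀ - φ * (R⁻¹ * R) * (S⁻¹ * φᵀ) := by
        simp only [Matrix.mul_sub, Matrix.sub_mul, Matrix.mul_assoc]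
      _ = φ * R⁻¹ * φᵀ - B := by rw [hSinv, hRinv, hBdef]; simp [Matrix.mul_assoc]
  have key2 : (Γ⁻¹ + φ * R⁻¹ * φᵀ) * (1 - Γ * B) = Γ⁻¹ := by
    have : (Γ⁻¹ + φ * R⁻¹ * φᵀ) * (1 - Γ * B)
        = Γ⁻¹ + φ * R⁻¹ * φᵀ - (Γ⁻¹ * Γ) * B - φ * R⁻¹ * φᵀ * (Γ * B) := by noncomm_ring
    rw [this, key1, hΓinv]; noncomm_ring
  have key : (1 - Γ * B)ᵀ * ((Γ⁻¹ + φ * R⁻¹ * φᵀ) * (1 - Γ * B)) = Γ⁻¹ - B := by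
    rw [key2]
    have : (1 - Γ * B)ᵀ = 1 - B * Γ := by
      rw [transpose_sub, transpose_mul, hBsym, hΓsym, transpose_one]
    rw [this]
    calc (1 - B * Γ) * Γ⁻¹ = Γ⁻¹ - B * (Γ * Γ⁻¹) := by noncomm_ring
      _ = Γ⁻¹ - B := by rw [hΓinv']; noncomm_ring
  -- reduce vector expressions
  have hu : ptil - (Γ * φ * S⁻¹) *ᵥ (φᵀ *ᵥ ptil) = (1 - Γ * B) *ᵥ ptil := by
    rw [sub_mulVec, one_mulVec, mulVec_mulVec, hBdef, Matrix.mul_assoc,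
      Matrix.mul_assoc, Matrix.mul_assoc]
  have hdot : ∀ (A : Matrix (Fin p) (Fin p) ℝ) (w : Fin p → ℝ),
      (A *ᵥ ptil) ⬝ᵥ w = ptil ⬝ᵥ (Aᵀ *ᵥ w) := by
    intro A w
    rw [dotProduct_mulVec, vecMul_transpose]
  have heq : (ptil - (Γ * φ * S⁻¹) *ᵥ (φᵀ *ᵥ ptil)) ⬝ᵥ
        ((Γ⁻¹ + φ * R⁻¹ * φᵀ) *ᵥ (ptil - (Γ * φ * S⁻¹) *ᵥ (φᵀ *ᵥ ptil))) =
      ptil ⬝ᵥ (Γ⁻¹ *ᵥ ptil) - (φᵀ *ᵥ ptil) ⬝ᵥ (S⁻¹ *ᵥ (φᵀ *ᵥ ptil)) := by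
    rw [hu, hdot, mulVec_mulVec, mulVec_mulVec,
      Matrix.mul_assoc,
      key, sub_mulVec, dotProduct_sub]
    congr 1
    rw [hBdef, ← mulVec_mulVec, ← mulVec_mulVec, dotProduct_mulVec,
      show ptil ᵥ* φ = φᵀ *ᵥ ptil from by
        rw [← transpose_transpose φ, vecMul_transpose, transpose_transpose]]
  refine ⟨heq, ?_⟩
  rw [heq]
  have hnn : 0 ≤ (φᵀ *ᵥ ptil) ⬝ᵥ (S⁻¹ *ᵥ (φᵀ *ᵥ ptil)) := by
    have := (hSpos.inv).posSemidef.dotProduct_mulVec_nonneg (φᵀ *ᵥ ptil)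
    simpa using this
  linarith
end

section
/- (Monotonicity and summability along RLS without resetting.) Let R be a symmetric positive-definite real q×q matrix, Γ₀ a symmetric positive-definite real p×p matrix, (φ_t)_{t≥1} a sequence in ℝ^{p×q}, and p̃₀ ∈ ℝᵖ. Define recursively Γ_{t+1} = (Γ_t⁻¹ + φ_{t+1}R⁻¹φ_{t+1}ᵀ)⁻¹, W_{t+1} = (R + φ_{t+1}ᵀΓ_tφ_{t+1})⁻¹, and p̃_{t+1} = p̃_t − Γ_t φ_{t+1} W_{t+1} φ_{t+1}ᵀ p̃_t. Then every Γ_t is symmetric positive definite, the sequence V_t = p̃_tᵀ Γ_t⁻¹ p̃_t is nonincreasing and nonnegative (hence convergent), and for every T ≥ 0, Σ_{t=0}^{T} (φ_{t+1}ᵀ p̃_t)ᵀ W_{t+1} (φ_{t+1}ᵀ p̃_t) ≤ V₀; in particular this series is summable. -/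
open Matrix Filter

private theorem dotswap15 {m n : ℕ} (A : Matrix (Fin m) (Fin n) ℝ) (x : Fin n → ℝ) (y : Fin m → ℝ) :
    (A *ᵥ x) ⬝ᵥ y = x ⬝ᵥ (Aᵀ *ᵥ y) := by
  rw [dotProduct_comm, dotProduct_mulVec, ← mulVec_transpose, dotProduct_comm]

private theorem key15 {p q : ℕ} {R : Matrix (Fin q) (Fin q) ℝ} (hR : R.PosDef)
    {G : Matrix (Fin p) (Fin p) ℝ} (hG : G.PosDef)
    (Φ : Matrix (Fin p) (Fin q) ℝ) (v : Fin p → ℝ) :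
    (v - (G * Φ * (R + Φᵀ * G * Φ)⁻¹) *ᵥ (Φᵀ *ᵥ v)) ⬝ᵥ
      ((G⁻¹ + Φ * R⁻¹ * Φᵀ) *ᵥ (v - (G * Φ * (R + Φᵀ * G * Φ)⁻¹) *ᵥ (Φᵀ *ᵥ v)))
    = v ⬝ᵥ (G⁻¹ *ᵥ v) -
      (Φᵀ *ᵥ v) ⬝ᵥ ((R + Φᵀ * G * Φ)⁻¹ *ᵥ (Φᵀ *ᵥ v)) := by
  set M := R + Φᵀ * G * Φ with hM
  have hMpd : M.PosDef := hR.add_posSemidef (hG.posSemidef.conjTranspose_mul_mul_same Φ)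
  set Wm := M⁻¹ with hWm
  have hWpd : Wm.PosDef := hMpd.inv
  have hMW : M * Wm = 1 := mul_nonsing_inv M hMpd.det_pos.ne'.isUnit
  have hGG : G⁻¹ * G = 1 := nonsing_inv_mul G hG.det_pos.ne'.isUnit
  have hGG' : G * G⁻¹ = 1 := mul_nonsing_inv G hG.det_pos.ne'.isUnit
  have hRR : R⁻¹ * R = 1 := nonsing_inv_mul R hR.det_pos.ne'.isUnit
  have hGs : Gᵀ = G := hG.isHermitian
  set s := Φᵀ *ᵥ v with hs
  set u := Wm *ᵥ s with hu
  have hΦGΦ : Φᵀ * G * Φ = M - R := by rw [hM, add_sub_cancel_left]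
  have hMu : M *ᵥ u = s := by rw [hu, mulVec_mulVec, hMW, one_mulVec]
  have hp' : (G * Φ * Wm) *ᵥ s = G *ᵥ (Φ *ᵥ u) := by
    simp only [hu, mulVec_mulVec, Matrix.mul_assoc]
  rw [hp']
  have h0 : Φᵀ *ᵥ (G *ᵥ (Φ *ᵥ u)) = s - R *ᵥ u := by
    simp only [mulVec_mulVec]
    rw [← Matrix.mul_assoc, hΦGΦ, sub_mulVec, hMu]
  have hA : Φᵀ *ᵥ (v - G *ᵥ (Φ *ᵥ u)) = R *ᵥ u := by
    rw [mulVec_sub, ← hs, h0, sub_sub_cancel]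
  rw [add_mulVec, dotProduct_add]
  have hterm2 : (v - G *ᵥ (Φ *ᵥ u)) ⬝ᵥ ((Φ * R⁻¹ * Φᵀ) *ᵥ (v - G *ᵥ (Φ *ᵥ u)))
      = u ⬝ᵥ (R *ᵥ u) := by
    rw [← mulVec_mulVec, ← mulVec_mulVec, hA]
    have hRu : R⁻¹ *ᵥ (R *ᵥ u) = u := by rw [mulVec_mulVec, hRR, one_mulVec]
    rw [hRu, dotProduct_comm, dotswap15 Φ u, hA]
  rw [hterm2]
  have hGinv : G⁻¹ *ᵥ (v - G *ᵥ (Φ *ᵥ u)) = G⁻¹ *ᵥ v - Φ *ᵥ u := by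
    rw [mulVec_sub]
    congr 1
    rw [mulVec_mulVec, mulVec_mulVec, hGG, Matrix.one_mul]
  have e1 : v ⬝ᵥ (Φ *ᵥ u) = s ⬝ᵥ u := by
    rw [dotProduct_mulVec, ← mulVec_transpose, ← hs]
  have hGv : G *ᵥ (G⁻¹ *ᵥ v) = v := by rw [mulVec_mulVec, hGG', one_mulVec]
  have e2 : (G *ᵥ (Φ *ᵥ u)) ⬝ᵥ (G⁻¹ *ᵥ v) = u ⬝ᵥ s := by
    rw [dotswap15 G (Φ *ᵥ u), hGs, hGv, dotswap15 Φ u, ← hs]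
  have e3 : (G *ᵥ (Φ *ᵥ u)) ⬝ᵥ (Φ *ᵥ u) = u ⬝ᵥ s - u ⬝ᵥ (R *ᵥ u) := by
    rw [dotswap15 G (Φ *ᵥ u), hGs, dotswap15 Φ u, h0, dotProduct_sub]
  have ht1 : (v - G *ᵥ (Φ *ᵥ u)) ⬝ᵥ (G⁻¹ *ᵥ (v - G *ᵥ (Φ *ᵥ u)))
      = v ⬝ᵥ (G⁻¹ *ᵥ v) - s ⬝ᵥ u - u ⬝ᵥ s + (u ⬝ᵥ s - u ⬝ᵥ (R *ᵥ u)) := by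
    rw [hGinv, sub_dotProduct, dotProduct_sub, dotProduct_sub, e1, e2, e3]
    ring
  rw [ht1]
  ring

/-- **monotonicity and summability along RLS without resetting.**
With `Γ_{t+1} = (Γ_t⁻¹ + φ_{t+1}R⁻¹φ_{t+1}ᵀ)⁻¹`, `W_{t+1} = (R + φ_{t+1}ᵀΓ_tφ_{t+1})⁻¹`,
and `p̃_{t+1} = p̃_t − Γ_tφ_{t+1}W_{t+1}φ_{t+1}ᵀp̃_t`: every `Γ_t` is symmetric positive
definite, `V_t = p̃_tᵀΓ_t⁻¹p̃_t` is nonincreasing and nonnegative (hence convergent), and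
`Σ_{t=0}^T (φ_{t+1}ᵀp̃_t)ᵀ W_{t+1} (φ_{t+1}ᵀp̃_t) ≤ V₀` for every `T`; in particular this
series is summable. -/
theorem stmt15 {p q : ℕ} (R : Matrix (Fin q) (Fin q) ℝ) (hR : R.PosDef)
    (Γ : ℕ → Matrix (Fin p) (Fin p) ℝ) (hΓ0 : (Γ 0).PosDef)
    (φ : ℕ → Matrix (Fin p) (Fin q) ℝ)
    (W : ℕ → Matrix (Fin q) (Fin q) ℝ)
    (hΓ : ∀ t : ℕ, Γ (t + 1) = ((Γ t)⁻¹ + φ (t + 1) * R⁻¹ * (φ (t + 1))ᵀ)⁻¹)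
    (hW : ∀ t : ℕ, W (t + 1) = (R + (φ (t + 1))ᵀ * Γ t * φ (t + 1))⁻¹)
    (ptil : ℕ → Fin p → ℝ)
    (hptil : ∀ t : ℕ, ptil (t + 1) =
      ptil t - (Γ t * φ (t + 1) * W (t + 1)) *ᵥ ((φ (t + 1))ᵀ *ᵥ ptil t)) :
    (∀ t : ℕ, (Γ t).PosDef) ∧
    (∀ t : ℕ, ptil (t + 1) ⬝ᵥ ((Γ (t + 1))⁻¹ *ᵥ ptil (t + 1)) ≤
      ptil t ⬝ᵥ ((Γ t)⁻¹ *ᵥ ptil t)) ∧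
    (∀ t : ℕ, 0 ≤ ptil t ⬝ᵥ ((Γ t)⁻¹ *ᵥ ptil t)) ∧
    (∃ L : ℝ, Tendsto (fun t : ℕ => ptil t ⬝ᵥ ((Γ t)⁻¹ *ᵥ ptil t)) atTop (nhds L)) ∧
    (∀ T : ℕ, ∑ t ∈ Finset.range (T + 1),
        ((φ (t + 1))ᵀ *ᵥ ptil t) ⬝ᵥ (W (t + 1) *ᵥ ((φ (t + 1))ᵀ *ᵥ ptil t)) ≤
      ptil 0 ⬝ᵥ ((Γ 0)⁻¹ *ᵥ ptil 0)) ∧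
    Summable (fun t : ℕ =>
      ((φ (t + 1))ᵀ *ᵥ ptil t) ⬝ᵥ (W (t + 1) *ᵥ ((φ (t + 1))ᵀ *ᵥ ptil t))) := by
  -- positive definiteness of each Γ t
  have hRinv : (R⁻¹).PosDef := hR.inv
  have hsum : ∀ t : ℕ, (Γ t).PosDef →
      ((Γ t)⁻¹ + φ (t + 1) * R⁻¹ * (φ (t + 1))ᵀ).PosDef := fun t ht => by
    have h1 : (φ (t + 1) * R⁻¹ * (φ (t + 1))ᵀ).PosSemidef := by
      have := hRinv.posSemidef.mul_mul_conjTranspose_same (φ (t + 1))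
      rwa [conjTranspose_eq_transpose_of_trivial] at this
    exact ht.inv.add_posSemidef h1
  have hPD : ∀ t : ℕ, (Γ t).PosDef := by
    intro t
    induction t with
    | zero => exact hΓ0
    | succ n ih => rw [hΓ n]; exact (hsum n ih).inv
  -- the W's are positive definite
  have hWPD : ∀ t : ℕ, (W (t + 1)).PosDef := fun t => by
    rw [hW t]
    exact (hR.add_posSemidef ((hPD t).posSemidef.conjTranspose_mul_mul_same (φ (t + 1)))).inv
  -- V notation
  set V : ℕ → ℝ := fun t => ptil t ⬝ᵥ ((Γ t)⁻¹ *ᵥ ptil t) with hV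
  set f : ℕ → ℝ := fun t =>
    ((φ (t + 1))ᵀ *ᵥ ptil t) ⬝ᵥ (W (t + 1) *ᵥ ((φ (t + 1))ᵀ *ᵥ ptil t)) with hf
  -- exact one-step identity
  have hstep : ∀ t : ℕ, V (t + 1) = V t - f t := by
    intro t
    have hinv : (Γ (t + 1))⁻¹ = (Γ t)⁻¹ + φ (t + 1) * R⁻¹ * (φ (t + 1))ᵀ := by
      rw [hΓ t]
      exact nonsing_inv_nonsing_inv _ (hsum t (hPD t)).det_pos.ne'.isUnit
    have := key15 hR (hPD t) (φ (t + 1)) (ptil t)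
    simp only [hV, hf]
    rw [hinv, hptil t, hW t]
    exact this
  -- nonnegativity of f
  have hf0 : ∀ t : ℕ, 0 ≤ f t := fun t => by
    have := (hWPD t).posSemidef.dotProduct_mulVec_nonneg ((φ (t + 1))ᵀ *ᵥ ptil t)
    simpa [hf] using this
  -- nonnegativity of V
  have hV0 : ∀ t : ℕ, 0 ≤ V t := fun t => by
    have := (hPD t).inv.posSemidef.dotProduct_mulVec_nonneg (ptil t)
    simpa [hV] using this
  -- monotonicity
  have hmono : ∀ t : ℕ, V (t + 1) ≤ V t := fun t => by
    rw [hstep t]; linarith [hf0 t]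
  -- partial sums identity
  have hsumV : ∀ T : ℕ, ∑ t ∈ Finset.range T, f t = V 0 - V T := by
    intro T
    induction T with
    | zero => simp
    | succ n ih => rw [Finset.sum_range_succ, ih, hstep n]; ring
  refine ⟨hPD, hmono, hV0, ?_, ?_, ?_⟩
  · exact ⟨⨅ t, V t, tendsto_atTop_ciInf (antitone_nat_of_succ_le hmono)
      ⟨0, fun x hx => by obtain ⟨t, rfl⟩ := hx; exact hV0 t⟩⟩
  · intro T
    rw [show (∑ t ∈ Finset.range (T + 1),
        ((φ (t + 1))ᵀ *ᵥ ptil t) ⬝ᵥ (W (t + 1) *ᵥ ((φ (t + 1))ᵀ *ᵥ ptil t))) =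
      ∑ t ∈ Finset.range (T + 1), f t from rfl, hsumV (T + 1)]
    have := hV0 (T + 1)
    linarith
  · refine summable_of_sum_range_le (c := V 0) hf0 fun n => ?_
    rw [hsumV n]
    linarith [hV0 n]
end

section
/- (Theorem 5, persistence-of-excitation part.) Let R be a symmetric positive-definite real q×q matrix, Γ₀ a symmetric positive-definite real p×p matrix, (φ_t)_{t≥1} a sequence in ℝ^{p×q}, and p̃₀ ∈ ℝᵖ. Define Γ_{t+1} = (Γ_t⁻¹ + φ_{t+1}R⁻¹φ_{t+1}ᵀ)⁻¹, W_{t+1} = (R + φ_{t+1}ᵀΓ_tφ_{t+1})⁻¹, and p̃_{t+1} = p̃_t − Γ_t φ_{t+1} W_{t+1} φ_{t+1}ᵀ p̃_t. Assume the regressor is persistently exciting: λ_min[Σ_{i=1}^t φ_iφ_iᵀ] → ∞ as t → ∞. Then p̃_t → 0 as t → ∞. -/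
open Matrix Filter

section Aux

/-- Quadratic-form lower bound from an eigenvalue lower bound, for real symmetric matrices. -/
lemma quad_lower_of_eigenvalues {m : Type*} [Fintype m] [DecidableEq m]
    {A : Matrix m m ℝ} (hA : A.IsHermitian) {a : ℝ}
    (ha : ∀ i, a ≤ hA.eigenvalues i) (x : m → ℝ) :
    a * (x ⬝ᵥ x) ≤ x ⬝ᵥ (A *ᵥ x) := by
  classical
  set U : Matrix m m ℝ := (hA.eigenvectorUnitary : Matrix m m ℝ) with hU
  set y : m → ℝ := star U *ᵥ x with hy
  have hdiag : (diagonal (RCLike.ofReal ∘ hA.eigenvalues) : Matrix m m ℝ)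
      = diagonal hA.eigenvalues := by
    congr 1
  have h1 : ∀ z : m → ℝ, x ⬝ᵥ (U *ᵥ z) = y ⬝ᵥ z := by
    intro z
    rw [dotProduct_mulVec, hy, star_eq_conjTranspose, conjTranspose_eq_transpose_of_trivial,
      mulVec_transpose]
  have hxAx : x ⬝ᵥ (A *ᵥ x) = y ⬝ᵥ (diagonal hA.eigenvalues *ᵥ y) := by
    conv_lhs => rw [hA.spectral_theorem, Unitary.conjStarAlgAut_apply]
    rw [← mulVec_mulVec, ← mulVec_mulVec, h1, hdiag]
  have hxx : x ⬝ᵥ x = y ⬝ᵥ y := by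
    have hUU : U * star U = 1 := Matrix.mem_unitaryGroup_iff.mp hA.eigenvectorUnitary.2
    have h2 : U *ᵥ y = x := by
      rw [hy, mulVec_mulVec, hUU, one_mulVec]
    calc x ⬝ᵥ x = x ⬝ᵥ (U *ᵥ y) := by rw [h2]
    _ = y ⬝ᵥ y := h1 y
  rw [hxAx, hxx]
  have hdy : y ⬝ᵥ (diagonal hA.eigenvalues *ᵥ y) = ∑ i, hA.eigenvalues i * (y i * y i) := by
    simp [dotProduct, mulVec_diagonal]
    apply Finset.sum_congr rfl
    intro i _
    ring
  have hyy : y ⬝ᵥ y = ∑ i, y i * y i := rfl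
  rw [hdy, hyy, Finset.mul_sum]
  apply Finset.sum_le_sum
  intro i _
  have : (0:ℝ) ≤ y i * y i := mul_self_nonneg _
  exact mul_le_mul_of_nonneg_right (ha i) this

lemma lambdaMin_le_eigen {p : ℕ} {A : Matrix (Fin p) (Fin p) ℝ} (hA : A.IsHermitian)
    (i : Fin p) : lambdaMin A ≤ hA.eigenvalues i :=
  csInf_le (A.finite_spectrum.bddBelow) (hA.eigenvalues_mem_spectrum_real i)

lemma quad_lambdaMin {p : ℕ} {A : Matrix (Fin p) (Fin p) ℝ} (hA : A.IsHermitian)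
    (x : Fin p → ℝ) : lambdaMin A * (x ⬝ᵥ x) ≤ x ⬝ᵥ (A *ᵥ x) :=
  quad_lower_of_eigenvalues hA (lambdaMin_le_eigen hA) x

lemma posdef_eps {m : Type*} [Fintype m] [DecidableEq m] {M : Matrix m m ℝ}
    (hM : M.PosDef) : ∃ ε > (0:ℝ), ∀ x : m → ℝ, ε * (x ⬝ᵥ x) ≤ x ⬝ᵥ (M *ᵥ x) := by
  rcases isEmpty_or_nonempty m with h | h
  · exact ⟨1, one_pos, fun x => by simp [dotProduct]⟩
  · refine ⟨Finset.univ.inf' Finset.univ_nonempty hM.1.eigenvalues, ?_, fun x =>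
      quad_lower_of_eigenvalues hM.1 (fun i => Finset.inf'_le _ (Finset.mem_univ i)) x⟩
    obtain ⟨i, -, h⟩ := Finset.exists_mem_eq_inf' Finset.univ_nonempty hM.1.eigenvalues
    rw [h]
    exact hM.eigenvalues_pos i

lemma dot_cs {m : Type*} [Fintype m] (x y : m → ℝ) :
    x ⬝ᵥ y ≤ Real.sqrt (x ⬝ᵥ x) * Real.sqrt (y ⬝ᵥ y) := by
  have h := Finset.sum_mul_sq_le_sq_mul_sq Finset.univ x y
  have hx : x ⬝ᵥ x = ∑ i, x i ^ 2 := by simp [dotProduct, sq]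
  have hy : y ⬝ᵥ y = ∑ i, y i ^ 2 := by simp [dotProduct, sq]
  have hd : x ⬝ᵥ y = ∑ i, x i * y i := rfl
  calc x ⬝ᵥ y ≤ |x ⬝ᵥ y| := le_abs_self _
  _ = Real.sqrt ((x ⬝ᵥ y) ^ 2) := (Real.sqrt_sq_eq_abs _).symm
  _ ≤ Real.sqrt ((∑ i, x i ^ 2) * ∑ i, y i ^ 2) := by
      apply Real.sqrt_le_sqrt; rw [hd]; exact h
  _ = Real.sqrt (x ⬝ᵥ x) * Real.sqrt (y ⬝ᵥ y) := by
      rw [hx, hy, Real.sqrt_mul (Finset.sum_nonneg fun i _ => sq_nonneg _)]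

lemma dot_self_nonneg {m : Type*} [Fintype m] (x : m → ℝ) : 0 ≤ x ⬝ᵥ x :=
  Finset.sum_nonneg fun i _ => mul_self_nonneg _

lemma norm_le_sqrt_dot {m : Type*} [Fintype m] (x : m → ℝ) :
    ‖x‖ ≤ Real.sqrt (x ⬝ᵥ x) := by
  rw [pi_norm_le_iff_of_nonneg (Real.sqrt_nonneg _)]
  intro i
  rw [Real.norm_eq_abs, ← Real.sqrt_sq_eq_abs]
  apply Real.sqrt_le_sqrt
  rw [sq]
  exact Finset.single_le_sum (f := fun j => x j * x j)
    (fun j _ => mul_self_nonneg _) (Finset.mem_univ i)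

lemma dot_sandwich {m k : Type*} [Fintype m] [Fintype k] (B : Matrix m k ℝ)
    (N : Matrix k k ℝ) (x : m → ℝ) :
    x ⬝ᵥ ((B * N * Bᵀ) *ᵥ x) = (Bᵀ *ᵥ x) ⬝ᵥ (N *ᵥ (Bᵀ *ᵥ x)) := by
  rw [← mulVec_mulVec, ← mulVec_mulVec, dotProduct_mulVec, ← mulVec_transpose]

lemma dot_self_sandwich {m k : Type*} [Fintype m] [Fintype k] [DecidableEq k]
    (B : Matrix m k ℝ) (x : m → ℝ) :
    x ⬝ᵥ ((B * Bᵀ) *ᵥ x) = (Bᵀ *ᵥ x) ⬝ᵥ (Bᵀ *ᵥ x) := by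
  have h : B * Bᵀ = B * (1 : Matrix k k ℝ) * Bᵀ := by rw [Matrix.mul_one]
  rw [h, dot_sandwich, one_mulVec]

lemma sum_mulVec' {ι m k : Type*} [Fintype k] (s : Finset ι)
    (A : ι → Matrix m k ℝ) (x : k → ℝ) :
    (∑ i ∈ s, A i) *ᵥ x = ∑ i ∈ s, A i *ᵥ x := by
  classical
  induction s using Finset.cons_induction with
  | empty => simp
  | cons a s ha ih => simp [Finset.sum_insert ha, Matrix.add_mulVec, ih]

lemma dotProduct_sum' {ι m : Type*} [Fintype m] (s : Finset ι) (x : m → ℝ)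
    (v : ι → m → ℝ) : x ⬝ᵥ (∑ i ∈ s, v i) = ∑ i ∈ s, x ⬝ᵥ v i := by
  classical
  induction s using Finset.cons_induction with
  | empty => simp
  | cons a s ha ih => simp [Finset.sum_insert ha, dotProduct_add, ih]

end Aux

/-- **Theorem 5, persistence-of-excitation part.** Along the RLS recursion
`Γ_{t+1} = (Γ_t⁻¹ + φ_{t+1}R⁻¹φ_{t+1}ᵀ)⁻¹`, `W_{t+1} = (R + φ_{t+1}ᵀΓ_tφ_{t+1})⁻¹`,
`p̃_{t+1} = p̃_t − Γ_tφ_{t+1}W_{t+1}φ_{t+1}ᵀp̃_t`, if the regressor is persistently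
exciting, i.e. `λ_min[Σ_{i=1}^t φᵢφᵢᵀ] → ∞`, then `p̃_t → 0`. -/
theorem stmt16 {p q : ℕ} (R : Matrix (Fin q) (Fin q) ℝ) (hR : R.PosDef)
    (Γ : ℕ → Matrix (Fin p) (Fin p) ℝ) (hΓ0 : (Γ 0).PosDef)
    (φ : ℕ → Matrix (Fin p) (Fin q) ℝ)
    (W : ℕ → Matrix (Fin q) (Fin q) ℝ)
    (hΓ : ∀ t : ℕ, Γ (t + 1) = ((Γ t)⁻¹ + φ (t + 1) * R⁻¹ * (φ (t + 1))ᵀ)⁻¹)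
    (hW : ∀ t : ℕ, W (t + 1) = (R + (φ (t + 1))ᵀ * Γ t * φ (t + 1))⁻¹)
    (ptil : ℕ → Fin p → ℝ)
    (hptil : ∀ t : ℕ, ptil (t + 1) =
      ptil t - (Γ t * φ (t + 1) * W (t + 1)) *ᵥ ((φ (t + 1))ᵀ *ᵥ ptil t))
    (hPE : Tendsto
      (fun t : ℕ => lambdaMin (∑ i ∈ Finset.Icc 1 t, φ i * (φ i)ᵀ)) atTop atTop) :
    Tendsto ptil atTop (nhds 0) := by
  classical
  -- determinant units of positive definite matrices
  have detU : ∀ {k : ℕ} {M : Matrix (Fin k) (Fin k) ℝ}, M.PosDef → IsUnit M.det :=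
    fun hM => (Matrix.isUnit_iff_isUnit_det _).mp hM.isUnit
  -- the information matrix
  set S : ℕ → Matrix (Fin p) (Fin p) ℝ :=
    fun t => (Γ 0)⁻¹ + ∑ i ∈ Finset.Icc 1 t, φ i * R⁻¹ * (φ i)ᵀ with hSdef
  have hterm : ∀ i, (φ i * R⁻¹ * (φ i)ᵀ).PosSemidef := by
    intro i
    have := (hR.inv.posSemidef).mul_mul_conjTranspose_same (φ i)
    rwa [conjTranspose_eq_transpose_of_trivial] at this
  have hSsum : ∀ t, (∑ i ∈ Finset.Icc 1 t, φ i * R⁻¹ * (φ i)ᵀ).PosSemidef := by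
    intro t
    exact Finset.sum_induction _ _ (fun a b ha hb => ha.add hb) .zero (fun i _ => hterm i)
  have hSpd : ∀ t, (S t).PosDef := fun t => (hΓ0.inv).add_posSemidef (hSsum t)
  have hSsucc : ∀ t, S (t + 1) = S t + φ (t + 1) * R⁻¹ * (φ (t + 1))ᵀ := by
    intro t
    simp only [hSdef]
    rw [Finset.sum_Icc_succ_top (Nat.succ_le_succ (Nat.zero_le t)), add_assoc]
  have hΓeq : ∀ t, Γ t = (S t)⁻¹ := by
    intro t
    induction t with
    | zero =>
      have h0 : S 0 = (Γ 0)⁻¹ := by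
        rw [show S 0 = (Γ 0)⁻¹ + ∑ i ∈ Finset.Icc 1 0, φ i * R⁻¹ * (φ i)ᵀ from rfl,
          Finset.Icc_eq_empty (by omega), Finset.sum_empty, add_zero]
      rw [h0, Matrix.nonsing_inv_nonsing_inv _ (detU hΓ0)]
    | succ t ih =>
      rw [hΓ t, ih, Matrix.nonsing_inv_nonsing_inv _ (detU (hSpd t)), ← hSsucc t]
  -- the W inverse identity
  have hWinv : ∀ t, (R + (φ (t + 1))ᵀ * (S t)⁻¹ * φ (t + 1)) * W (t + 1) = 1 := by
    intro t
    have hpsd : ((φ (t + 1))ᵀ * (S t)⁻¹ * φ (t + 1)).PosSemidef := by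
      have := ((hSpd t).inv.posSemidef).conjTranspose_mul_mul_same (φ (t + 1))
      rwa [conjTranspose_eq_transpose_of_trivial] at this
    have hpd : (R + (φ (t + 1))ᵀ * (S t)⁻¹ * φ (t + 1)).PosDef := hR.add_posSemidef hpsd
    rw [hW t, hΓeq t]
    exact Matrix.mul_nonsing_inv _ (detU hpd)
  -- the invariant
  have hconst : ∀ t, S t *ᵥ ptil t = S 0 *ᵥ ptil 0 := by
    intro t
    induction t with
    | zero => rfl
    | succ t ih =>
      rw [← ih]
      set Φ := φ (t + 1)
      set Wm := W (t + 1)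
      have hA : S t * (S t)⁻¹ = 1 := Matrix.mul_nonsing_inv _ (detU (hSpd t))
      have hRinv : R⁻¹ * R = 1 := Matrix.nonsing_inv_mul _ (detU hR)
      have hp : ptil (t + 1) = (1 - (S t)⁻¹ * Φ * Wm * Φᵀ) *ᵥ ptil t := by
        rw [hptil t, hΓeq t, mulVec_mulVec, sub_mulVec, one_mulVec]
      have key : Φ * R⁻¹ * Φᵀ
          = Φ * (Wm * Φᵀ) + Φ * (R⁻¹ * (Φᵀ * ((S t)⁻¹ * (Φ * (Wm * Φᵀ))))) := by
        calc Φ * R⁻¹ * Φᵀ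
            = Φ * (R⁻¹ * ((R + Φᵀ * (S t)⁻¹ * Φ) * Wm)) * Φᵀ := by
              rw [hWinv t, mul_one]
          _ = Φ * ((R⁻¹ * R) * (Wm * Φᵀ))
              + Φ * (R⁻¹ * (Φᵀ * ((S t)⁻¹ * (Φ * (Wm * Φᵀ))))) := by
              simp only [Matrix.add_mul, Matrix.mul_add, Matrix.mul_sub, Matrix.sub_mul, Matrix.mul_one, Matrix.one_mul, Matrix.mul_assoc]
          _ = Φ * (Wm * Φᵀ) + Φ * (R⁻¹ * (Φᵀ * ((S t)⁻¹ * (Φ * (Wm * Φᵀ))))) := by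
              rw [hRinv, Matrix.one_mul]
      have hmat : S (t + 1) * (1 - (S t)⁻¹ * Φ * Wm * Φᵀ) = S t := by
        rw [hSsucc t]
        have expand : (S t + Φ * R⁻¹ * Φᵀ) * (1 - (S t)⁻¹ * Φ * Wm * Φᵀ)
            = S t + Φ * R⁻¹ * Φᵀ - (S t * (S t)⁻¹) * (Φ * (Wm * Φᵀ))
              - Φ * (R⁻¹ * (Φᵀ * ((S t)⁻¹ * (Φ * (Wm * Φᵀ))))) := by
          simp only [Matrix.add_mul, Matrix.mul_add, Matrix.mul_sub, Matrix.sub_mul, Matrix.mul_one, Matrix.one_mul, Matrix.mul_assoc]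
          abel
        rw [expand, hA, Matrix.one_mul, key]
        abel
      rw [hp, mulVec_mulVec, hmat]
  -- closed form for ptil
  set c : Fin p → ℝ := S 0 *ᵥ ptil 0 with hc
  have hSc : ∀ t, S t *ᵥ ptil t = c := hconst
  -- quadratic bounds
  obtain ⟨ε, hε, hεq⟩ := posdef_eps hR.inv
  set M : ℕ → Matrix (Fin p) (Fin p) ℝ := fun t => ∑ i ∈ Finset.Icc 1 t, φ i * (φ i)ᵀ with hM
  have hMherm : ∀ t, (M t).IsHermitian := by
    intro t
    apply Finset.sum_induction _ _ (fun a b ha hb => ha.add hb)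
      (Matrix.isHermitian_zero) (fun i _ => ?_)
    have := (Matrix.posSemidef_self_mul_conjTranspose (φ i)).isHermitian
    rwa [conjTranspose_eq_transpose_of_trivial] at this
  set a : ℕ → ℝ := fun t => ε * lambdaMin (M t) with ha
  have hquadS : ∀ t (x : Fin p → ℝ), a t * (x ⬝ᵥ x) ≤ x ⬝ᵥ (S t *ᵥ x) := by
    intro t x
    have h0 : 0 ≤ x ⬝ᵥ ((Γ 0)⁻¹ *ᵥ x) := by
      have := hΓ0.inv.posSemidef.dotProduct_mulVec_nonneg x
      simpa using this
    have hterms : ∀ i, ε * (x ⬝ᵥ ((φ i * (φ i)ᵀ) *ᵥ x)) ≤ x ⬝ᵥ ((φ i * R⁻¹ * (φ i)ᵀ) *ᵥ x) := by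
      intro i
      rw [dot_sandwich, dot_self_sandwich]
      exact hεq ((φ i)ᵀ *ᵥ x)
    have hsum : ε * (x ⬝ᵥ (M t *ᵥ x))
        ≤ x ⬝ᵥ ((∑ i ∈ Finset.Icc 1 t, φ i * R⁻¹ * (φ i)ᵀ) *ᵥ x) := by
      rw [hM]
      rw [sum_mulVec', dotProduct_sum', sum_mulVec', dotProduct_sum', Finset.mul_sum]
      exact Finset.sum_le_sum fun i _ => hterms i
    have hlm : lambdaMin (M t) * (x ⬝ᵥ x) ≤ x ⬝ᵥ (M t *ᵥ x) := quad_lambdaMin (hMherm t) x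
    have hSx : x ⬝ᵥ (S t *ᵥ x)
        = x ⬝ᵥ ((Γ 0)⁻¹ *ᵥ x)
          + x ⬝ᵥ ((∑ i ∈ Finset.Icc 1 t, φ i * R⁻¹ * (φ i)ᵀ) *ᵥ x) := by
      rw [hSdef]
      rw [Matrix.add_mulVec, dotProduct_add]
    rw [hSx, ha]
    calc ε * lambdaMin (M t) * (x ⬝ᵥ x) = ε * (lambdaMin (M t) * (x ⬝ᵥ x)) := by ring
    _ ≤ ε * (x ⬝ᵥ (M t *ᵥ x)) := by
        exact mul_le_mul_of_nonneg_left hlm (le_of_lt hε)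
    _ ≤ x ⬝ᵥ ((∑ i ∈ Finset.Icc 1 t, φ i * R⁻¹ * (φ i)ᵀ) *ᵥ x) := hsum
    _ ≤ _ := le_add_of_nonneg_left h0
  -- the norm bound
  set nc : ℝ := Real.sqrt (c ⬝ᵥ c) with hnc
  have hbound : ∀ t, 0 < a t → ‖ptil t‖ ≤ nc / a t := by
    intro t hat
    set y := ptil t with hy
    set ny : ℝ := Real.sqrt (y ⬝ᵥ y) with hny
    have hyy : y ⬝ᵥ y = ny ^ 2 := (Real.sq_sqrt (dot_self_nonneg y)).symm
    have h1 : a t * ny ^ 2 ≤ ny * nc := by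
      calc a t * ny ^ 2 = a t * (y ⬝ᵥ y) := by rw [hyy]
      _ ≤ y ⬝ᵥ (S t *ᵥ y) := hquadS t y
      _ = y ⬝ᵥ c := by rw [hSc t]
      _ ≤ ny * nc := dot_cs y c
    have hnyn : ‖y‖ ≤ ny := norm_le_sqrt_dot y
    rcases eq_or_lt_of_le (Real.sqrt_nonneg (y ⬝ᵥ y)) with h | h
    · have : ny = 0 := h.symm
      rw [le_div_iff₀ hat]
      calc ‖y‖ * a t ≤ ny * a t :=
        mul_le_mul_of_nonneg_right hnyn (le_of_lt hat)
      _ = 0 := by rw [this, zero_mul]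
      _ ≤ nc := Real.sqrt_nonneg _
    · have h2 : a t * ny ≤ nc := by
        have := h1
        rw [sq] at this
        have h3 : a t * ny * ny ≤ nc * ny := by
          calc a t * ny * ny = a t * (ny * ny) := by ring
          _ ≤ ny * nc := this
          _ = nc * ny := by ring
        exact le_of_mul_le_mul_right h3 h
      rw [le_div_iff₀ hat]
      calc ‖y‖ * a t ≤ ny * a t := mul_le_mul_of_nonneg_right hnyn (le_of_lt hat)
      _ = a t * ny := by ring
      _ ≤ nc := h2
  -- conclude
  have hatop : Tendsto a atTop atTop := hPE.const_mul_atTop hε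
  have hg0 : Tendsto (fun t => nc / a t) atTop (nhds 0) :=
    tendsto_const_nhds.div_atTop hatop
  have hev : ∀ᶠ t in atTop, ‖ptil t‖ ≤ nc / a t := by
    filter_upwards [hatop.eventually_gt_atTop 0] with t ht
    exact hbound t ht
  have hnorm : Tendsto (fun t => ‖ptil t‖) atTop (nhds 0) :=
    squeeze_zero' (Eventually.of_forall fun t => norm_nonneg _) hev hg0
  exact tendsto_zero_iff_norm_tendsto_zero.mpr hnorm
end
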